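/- Let α, β, γ, δ, a be real numbers with sin(α/2) ≠ 0 and sin(β/2) ≠ 0, and suppose sin(α/2)·sin(δ − β/2) = sin(β/2)·sin(γ − α/2), (1 − cos α)·sin δ·cos a = sin α·cos δ + sin γ, and (1 − cos β)·sin γ·cos a = sin β·cos γ + sin δ. Then the (2,2)-entry (middle diagonal entry) of the matrix K = Z(π−δ)·Y(a)·Z(π−α)·Y(a)·Z(π−β)·Y(a)·Z(π−γ) equals 1, and consequently there exists b ∈ ℝ such that Y(a)·Z(π−α)·Y(a)·Z(π−β)·Y(a)·Z(π−γ)·Y(b)·Z(π−δ) equals the 3×3 identity matrix. -/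
import Mathlib


open Real Matrix

/-- Rotation about the `y`-axis by angle `t`. -/
noncomputable def Yrot (t : ℝ) : Matrix (Fin 3) (Fin 3) ℝ :=
  !![Real.cos t, 0, Real.sin t; 0, 1, 0; -Real.sin t, 0, Real.cos t]

/-- Rotation about the `z`-axis by angle `t`. -/
noncomputable def Zrot (t : ℝ) : Matrix (Fin 3) (Fin 3) ℝ :=
  !![Real.cos t, -Real.sin t, 0; Real.sin t, Real.cos t, 0; 0, 0, 1]

/-- Converse part of Lemma 3.12: the three Coolsaet equalities imply that the
`(2,2)`-entry of `K = Z(π-δ) Y(a) Z(π-α) Y(a) Z(π-β) Y(a) Z(π-γ)` is `1`, and hence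
an almost equilateral quadrilateral with the given data exists, i.e. there is
`b` with `Y(a) Z(π-α) Y(a) Z(π-β) Y(a) Z(π-γ) Y(b) Z(π-δ) = 1`. -/
lemma Yrot_transpose (t : ℝ) : (Yrot t)ᵀ = Yrot (-t) := by
  ext i j; fin_cases i <;> fin_cases j <;> simp [Yrot, Matrix.transpose_apply]
lemma Zrot_transpose (t : ℝ) : (Zrot t)ᵀ = Zrot (-t) := by
  ext i j; fin_cases i <;> fin_cases j <;> simp [Zrot, Matrix.transpose_apply]
lemma Yrot_mul_neg (t : ℝ) : Yrot t * Yrot (-t) = 1 := by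
  ext i j
  fin_cases i <;> fin_cases j <;>
    simp [Yrot, Matrix.mul_apply, Fin.sum_univ_three, Matrix.one_apply] <;>
    nlinarith [sin_sq_add_cos_sq t]
lemma Zrot_mul_neg (t : ℝ) : Zrot t * Zrot (-t) = 1 := by
  ext i j
  fin_cases i <;> fin_cases j <;>
    simp [Zrot, Matrix.mul_apply, Fin.sum_univ_three, Matrix.one_apply] <;>
    nlinarith [sin_sq_add_cos_sq t]
lemma Yrot_mul_transpose (t : ℝ) : Yrot t * (Yrot t)ᵀ = 1 := by
  rw [Yrot_transpose]; exact Yrot_mul_neg t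
lemma Zrot_mul_transpose (t : ℝ) : Zrot t * (Zrot t)ᵀ = 1 := by
  rw [Zrot_transpose]; exact Zrot_mul_neg t
set_option maxHeartbeats 1000000 in
lemma Yrot_det (t : ℝ) : (Yrot t).det = 1 := by
  simp [Yrot, Matrix.det_fin_three]; nlinarith [sin_sq_add_cos_sq t]
lemma Zrot_det (t : ℝ) : (Zrot t).det = 1 := by
  simp [Zrot, Matrix.det_fin_three]; nlinarith [sin_sq_add_cos_sq t]

-- existence of angle
lemma exists_angle (c d : ℝ) (h : c^2 + d^2 = 1) : ∃ b : ℝ, Real.cos b = c ∧ Real.sin b = d := by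
  have hc1 : -1 ≤ c := by nlinarith
  have hc2 : c ≤ 1 := by nlinarith
  have hd2 : d^2 = 1 - c^2 := by linarith
  rcases le_or_gt 0 d with hd | hd
  · refine ⟨Real.arccos c, Real.cos_arccos hc1 hc2, ?_⟩
    rw [Real.sin_arccos]
    rw [show (1 : ℝ) - c ^ 2 = d ^ 2 by linarith]
    exact Real.sqrt_sq hd
  · refine ⟨-Real.arccos c, by rw [Real.cos_neg]; exact Real.cos_arccos hc1 hc2, ?_⟩
    rw [Real.sin_neg, Real.sin_arccos]
    rw [show (1 : ℝ) - c ^ 2 = d ^ 2 by linarith]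
    rw [show d ^ 2 = (-d)^2 by ring, Real.sqrt_sq (by linarith)]
    ring


lemma SO3_mid (K : Matrix (Fin 3) (Fin 3) ℝ) (hKKt : K * Kᵀ = 1) (hKtK : Kᵀ * K = 1)
    (hdet : K.det = 1) (h11 : K 1 1 = 1) : ∃ b : ℝ, Yrot b = Kᵀ := by
  have row1 : K 1 0 * K 1 0 + K 1 1 * K 1 1 + K 1 2 * K 1 2 = 1 := by
    have := congrFun (congrFun hKKt 1) 1
    simpa [Matrix.mul_apply, Fin.sum_univ_three, Matrix.one_apply, Matrix.transpose_apply]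
      using this
  have col1 : K 0 1 * K 0 1 + K 1 1 * K 1 1 + K 2 1 * K 2 1 = 1 := by
    have := congrFun (congrFun hKtK 1) 1
    simpa [Matrix.mul_apply, Fin.sum_univ_three, Matrix.one_apply, Matrix.transpose_apply]
      using this
  have h10 : K 1 0 = 0 := by nlinarith [row1, h11, sq_nonneg (K 1 0), sq_nonneg (K 1 2)]
  have h12 : K 1 2 = 0 := by nlinarith [row1, h11, sq_nonneg (K 1 0), sq_nonneg (K 1 2)]
  have h01 : K 0 1 = 0 := by nlinarith [col1, h11, sq_nonneg (K 0 1), sq_nonneg (K 2 1)]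
  have h21 : K 2 1 = 0 := by nlinarith [col1, h11, sq_nonneg (K 0 1), sq_nonneg (K 2 1)]
  have row0 : K 0 0 * K 0 0 + K 0 1 * K 0 1 + K 0 2 * K 0 2 = 1 := by
    have := congrFun (congrFun hKKt 0) 0
    simpa [Matrix.mul_apply, Fin.sum_univ_three, Matrix.one_apply, Matrix.transpose_apply]
      using this
  have row2 : K 2 0 * K 2 0 + K 2 1 * K 2 1 + K 2 2 * K 2 2 = 1 := by
    have := congrFun (congrFun hKKt 2) 2
    simpa [Matrix.mul_apply, Fin.sum_univ_three, Matrix.one_apply, Matrix.transpose_apply]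
      using this
  have row02 : K 0 0 * K 2 0 + K 0 1 * K 2 1 + K 0 2 * K 2 2 = 0 := by
    have := congrFun (congrFun hKKt 0) 2
    simpa [Matrix.mul_apply, Fin.sum_univ_three, Matrix.one_apply, Matrix.transpose_apply]
      using this
  have hdet3 : K 0 0 * K 2 2 - K 0 2 * K 2 0 = 1 := by
    have hd := hdet
    rw [Matrix.det_fin_three] at hd
    rw [h10, h12, h01, h21, h11] at hd
    linarith [hd]
  have hcir : K 0 0 ^ 2 + K 0 2 ^ 2 = 1 := by linear_combination row0 - K 0 1 * h01
  have hcir2 : K 2 0 ^ 2 + K 2 2 ^ 2 = 1 := by linear_combination row2 - K 2 1 * h21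
  have horth : K 0 0 * K 2 0 + K 0 2 * K 2 2 = 0 := by linear_combination row02 - K 0 1 * h21
  have h22 : K 2 2 = K 0 0 := by
    have :  K 2 2 * (K 0 0 * K 2 2 - K 0 2 * K 2 0) + K 2 0 * (K 0 0 * K 2 0 + K 0 2 * K 2 2)
        = K 0 0 * (K 2 0 ^ 2 + K 2 2 ^ 2) := by ring
    rw [hdet3, horth, hcir2] at this
    linarith [this]
  have h20 : K 2 0 = -(K 0 2) := by
    have : K 2 0 * (K 0 0 * K 2 2 - K 0 2 * K 2 0) - K 2 2 * (K 0 0 * K 2 0 + K 0 2 * K 2 2)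
        = -(K 0 2) * (K 2 0 ^ 2 + K 2 2 ^ 2) := by ring
    rw [hdet3, horth, hcir2] at this
    linarith [this]
  obtain ⟨b, hb1, hb2⟩ := exists_angle (K 0 0) (-(K 0 2)) (by nlinarith [hcir])
  refine ⟨b, ?_⟩
  ext i j
  fin_cases i <;> fin_cases j <;>
    simp [Yrot, Matrix.transpose_apply, hb1, hb2, h10, h12, h01, h21, h11, h20, h22]


theorem part2 (α β γ δ a : ℝ)
    (h11 : (Zrot (π - δ) * Yrot a * Zrot (π - α) * Yrot a * Zrot (π - β) * Yrot a *
      Zrot (π - γ)) 1 1 = 1) :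
    ∃ b : ℝ, Yrot a * Zrot (π - α) * Yrot a * Zrot (π - β) * Yrot a * Zrot (π - γ) *
      Yrot b * Zrot (π - δ) = 1 := by
  have mulO : ∀ (A B : Matrix (Fin 3) (Fin 3) ℝ), A * Aᵀ = 1 → B * Bᵀ = 1 →
      (A * B) * (A * B)ᵀ = 1 := by
    intro A B hA hB
    calc (A * B) * (A * B)ᵀ = A * (B * Bᵀ) * Aᵀ := by
          rw [Matrix.transpose_mul]; simp only [Matrix.mul_assoc]
      _ = 1 := by rw [hB, Matrix.mul_one, hA]
  have hMMt : (Yrot a * Zrot (π - α) * Yrot a * Zrot (π - β) * Yrot a * Zrot (π - γ)) *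
      (Yrot a * Zrot (π - α) * Yrot a * Zrot (π - β) * Yrot a * Zrot (π - γ))ᵀ = 1 :=
    mulO _ _ (mulO _ _ (mulO _ _ (mulO _ _ (mulO _ _ (Yrot_mul_transpose a)
      (Zrot_mul_transpose _)) (Yrot_mul_transpose a)) (Zrot_mul_transpose _))
      (Yrot_mul_transpose a)) (Zrot_mul_transpose _)
  have hKKt : (Zrot (π - δ) * Yrot a * Zrot (π - α) * Yrot a * Zrot (π - β) * Yrot a *
      Zrot (π - γ)) * (Zrot (π - δ) * Yrot a * Zrot (π - α) * Yrot a * Zrot (π - β) * Yrot a *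
      Zrot (π - γ))ᵀ = 1 := by
    have h0 : Zrot (π - δ) * Yrot a * Zrot (π - α) * Yrot a * Zrot (π - β) * Yrot a *
        Zrot (π - γ) = Zrot (π - δ) *
        (Yrot a * Zrot (π - α) * Yrot a * Zrot (π - β) * Yrot a * Zrot (π - γ)) := by
      simp only [Matrix.mul_assoc]
    rw [h0]
    exact mulO _ _ (Zrot_mul_transpose _) hMMt
  have hKtK := mul_eq_one_comm.mp hKKt
  have hdet : (Zrot (π - δ) * Yrot a * Zrot (π - α) * Yrot a * Zrot (π - β) * Yrot a *
      Zrot (π - γ)).det = 1 := by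
    simp only [Matrix.det_mul, Yrot_det, Zrot_det, mul_one, one_mul]
  obtain ⟨b, hb⟩ := SO3_mid _ hKKt hKtK hdet h11
  refine ⟨b, ?_⟩
  have h0 : Zrot (π - δ) * Yrot a * Zrot (π - α) * Yrot a * Zrot (π - β) * Yrot a *
      Zrot (π - γ) = Zrot (π - δ) *
      (Yrot a * Zrot (π - α) * Yrot a * Zrot (π - β) * Yrot a * Zrot (π - γ)) := by
    simp only [Matrix.mul_assoc]
  rw [hb, h0, Matrix.transpose_mul]
  calc (Yrot a * Zrot (π - α) * Yrot a * Zrot (π - β) * Yrot a * Zrot (π - γ)) *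
        ((Yrot a * Zrot (π - α) * Yrot a * Zrot (π - β) * Yrot a * Zrot (π - γ))ᵀ *
          (Zrot (π - δ))ᵀ) * Zrot (π - δ)
      = ((Yrot a * Zrot (π - α) * Yrot a * Zrot (π - β) * Yrot a * Zrot (π - γ)) *
        (Yrot a * Zrot (π - α) * Yrot a * Zrot (π - β) * Yrot a * Zrot (π - γ))ᵀ) *
          ((Zrot (π - δ))ᵀ * Zrot (π - δ)) := by simp only [Matrix.mul_assoc]
    _ = 1 := by
        rw [hMMt, Matrix.one_mul, Zrot_transpose]
        have := Zrot_mul_neg (-(π - δ)); simpa using this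

lemma key_alg (p q r s cg sg cd sd x y : ℝ) (hq : q ≠ 0) (hs : s ≠ 0)
    (hpq : p^2 + q^2 = 1) (hrs : r^2 + s^2 = 1)
    (hgd : cg^2 + sg^2 = 1) (hdd : cd^2 + sd^2 = 1) (hxy : x^2 + y^2 = 1)
    (e1 : q*r*sd - q*s*cd - s*p*sg + s*q*cg = 0)
    (e2 : 2*q^2*sd*x - 2*p*q*cd - sg = 0)
    (e3 : 2*s^2*sg*x - 2*r*s*cg - sd = 0) :
    1*sg*sd*x*y^2 + 1*s^2*sg*sd*x*y^2 - 2*r*s*cg*sd*y^2 - 1*r^2*sg*sd*x*y^2 + 1*q^2*sg*sd*x*y^2 - 1*q^2*s^2*sg*sd*x^3 + 1*q^2*s^2*cg*cd + 2*q^2*r*s*sg*cd*x + 2*q^2*r*s*cg*sd*x^2 + 1*q^2*r^2*sg*sd*x^3 - 1*q^2*r^2*cg*cd - 2*p*q*sg*cd*y^2 + 2*p*q*s^2*sg*cd*x^2 + 2*p*q*s^2*cg*sd*x + 4*p*q*r*s*sg*sd*x^2 - 4*p*q*r*s*cg*cd*x - 2*p*q*r^2*sg*cd*x^2 - 2*p*q*r^2*cg*sd*x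 - 1*p^2*sg*sd*x*y^2 + 1*p^2*s^2*sg*sd*x^3 - 1*p^2*s^2*cg*cd - 2*p^2*r*s*sg*cd*x - 2*p^2*r*s*cg*sd*x^2 - 1*p^2*r^2*sg*sd*x^3 + 1*p^2*r^2*cg*cd = 1 := by
  have main : q * s * ((1*sg*sd*x*y^2 + 1*s^2*sg*sd*x*y^2 - 2*r*s*cg*sd*y^2 - 1*r^2*sg*sd*x*y^2 + 1*q^2*sg*sd*x*y^2 - 1*q^2*s^2*sg*sd*x^3 + 1*q^2*s^2*cg*cd + 2*q^2*r*s*sg*cd*x + 2*q^2*r*s*cg*sd*x^2 + 1*q^2*r^2*sg*sd*x^3 - 1*q^2*r^2*cg*cd - 2*p*q*sg*cd*y^2 + 2*p*q*s^2*sg*cd*x^2 + 2*p*q*s^2*cg*sd*x + 4*p*q*r*s*sg*sd*x^2 - 4*p*q*r*s*cg*cd*x - 2*p*q*r^2*sg*cd*x^2 - 2*p*q*r^2*cg*sd*x - 1*p^2*sg*sd*x*y^2 + 1*p^2*s^2*sg*sd*x^3 - 1*p^2*s^2*cg*cd - 2*p^2*r*s*sg*cd*x - 2*p^2*r*s*cg*sd*x^2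 - 1*p^2*r^2*sg*sd*x^3 + 1*p^2*r^2*cg*cd) - 1) = 0 := by
    linear_combination (-1*cd + 2*q^2*cd + 2*p*q*sd*x) * e1 + (-2*q*s^3*sg*x^2 + 2*q*r*s^2*cg*x + 1*p*s*cd) * e2 + (1*q*s*sd - 1*q*s*sg*x - 1*q*r*cd + 2*q^3*r*cd + 2*p*q^2*r*sd*x) * e3 +
      (2*q*s*cd^2 + 1*q*s*sg*sd*x + 1*q*s*sg*sd*x^3 + 1*q*s^3*sg*sd*x^3 - 1*q*s^3*cg*cd - 2*q*r*s^2*sg*cd*x - 2*q*r*s^2*cg*sd*x^2 - 1*q*r^2*s*sg*sd*x^3 + 1*q*r^2*s*cg*cd) * hpq + (-1*q*s*sg*sd*x - 1*q*s*cg*cd + 2*q^3*s*sg*sd*x^3 + 2*q^3*s*cg*cd - 2*p*q^2*s*sg*cd*x^2 + 2*p*q^2*s*cg*sd*x) * hrs + (1*q*s) * hdd + (1*q*s*sg*sd*x + 1*q*s^3*sg*sd*x - 2*q*r*s^2*cg*sd - 1*q*r^2*s*sg*sd*x + 1*q^3*s*sg*sd*x - 2*p*q^2*s*sg*cd - 1*p^2*q*s*sg*sd*x)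 * hxy
  have hqs : q * s ≠ 0 := mul_ne_zero hq hs
  have := (mul_eq_zero.mp main).resolve_left hqs
  linarith [this]

set_option maxHeartbeats 1000000 in
lemma part1 (α β γ δ a : ℝ)
    (hα : Real.sin (α / 2) ≠ 0) (hβ : Real.sin (β / 2) ≠ 0)
    (h1 : Real.sin (α / 2) * Real.sin (δ - β / 2) =
      Real.sin (β / 2) * Real.sin (γ - α / 2))
    (h2 : (1 - Real.cos α) * Real.sin δ * Real.cos a = Real.sin α * Real.cos δ + Real.sin γ)
    (h3 : (1 - Real.cos β) * Real.sin γ * Real.cos a = Real.sin β * Real.cos γ + Real.sin δ) :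
    (Zrot (π - δ) * Yrot a * Zrot (π - α) * Yrot a * Zrot (π - β) * Yrot a *
      Zrot (π - γ)) 1 1 = 1 := by
  have hpq : Real.cos (α/2)^2 + Real.sin (α/2)^2 = 1 := by
    linear_combination Real.sin_sq_add_cos_sq (α/2)
  have hrs : Real.cos (β/2)^2 + Real.sin (β/2)^2 = 1 := by
    linear_combination Real.sin_sq_add_cos_sq (β/2)
  have hgd : Real.cos γ^2 + Real.sin γ^2 = 1 := by
    linear_combination Real.sin_sq_add_cos_sq γ
  have hdd : Real.cos δ^2 + Real.sin δ^2 = 1 := by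
    linear_combination Real.sin_sq_add_cos_sq δ
  have hxy : Real.cos a^2 + Real.sin a^2 = 1 := by
    linear_combination Real.sin_sq_add_cos_sq a
  have hca : Real.cos α = Real.cos (α/2)^2 - Real.sin (α/2)^2 := by
    have h := Real.cos_two_mul (α/2)
    rw [show (2:ℝ)*(α/2) = α by ring] at h
    linear_combination h + Real.sin_sq_add_cos_sq (α/2)
  have hsa : Real.sin α = 2 * Real.sin (α/2) * Real.cos (α/2) := by
    have h := Real.sin_two_mul (α/2)
    rw [show (2:ℝ)*(α/2) = α by ring] at h
    linear_combination h
  have hcb : Real.cos β = Real.cos (β/2)^2 - Real.sin (β/2)^2 := by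
    have h := Real.cos_two_mul (β/2)
    rw [show (2:ℝ)*(β/2) = β by ring] at h
    linear_combination h + Real.sin_sq_add_cos_sq (β/2)
  have hsb : Real.sin β = 2 * Real.sin (β/2) * Real.cos (β/2) := by
    have h := Real.sin_two_mul (β/2)
    rw [show (2:ℝ)*(β/2) = β by ring] at h
    linear_combination h
  rw [Real.sin_sub, Real.sin_sub] at h1
  have e1 : Real.sin (α/2)*Real.cos (β/2)*Real.sin δ - Real.sin (α/2)*Real.sin (β/2)*Real.cos δ
      - Real.sin (β/2)*Real.cos (α/2)*Real.sin γ + Real.sin (β/2)*Real.sin (α/2)*Real.cos γ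
      = 0 := by linear_combination h1
  have e2 : 2*Real.sin (α/2)^2*Real.sin δ*Real.cos a - 2*Real.cos (α/2)*Real.sin (α/2)*Real.cos δ
      - Real.sin γ = 0 := by
    linear_combination h2 + (Real.sin δ * Real.cos a)*hca + (Real.sin δ * Real.cos a)*hpq
      + Real.cos δ * hsa
  have e3 : 2*Real.sin (β/2)^2*Real.sin γ*Real.cos a - 2*Real.cos (β/2)*Real.sin (β/2)*Real.cos γ
      - Real.sin δ = 0 := by
    linear_combination h3 + (Real.sin γ * Real.cos a)*hcb + (Real.sin γ * Real.cos a)*hrs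
      + Real.cos γ * hsb
  have hK := key_alg (Real.cos (α/2)) (Real.sin (α/2)) (Real.cos (β/2)) (Real.sin (β/2))
    (Real.cos γ) (Real.sin γ) (Real.cos δ) (Real.sin δ) (Real.cos a) (Real.sin a)
    hα hβ hpq hrs hgd hdd hxy e1 e2 e3
  have p2_0 : (Zrot (π - δ) * Yrot a) 1 0 = 1*Real.sin δ*Real.cos a := by
    rw [Matrix.mul_apply, Fin.sum_univ_three]
    simp [Yrot, Zrot, Real.cos_pi_sub, Real.sin_pi_sub]
    try ring
  have p2_1 : (Zrot (π - δ) * Yrot a) 1 1 = -1*Real.cos δ := by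
    rw [Matrix.mul_apply, Fin.sum_univ_three]
    simp [Yrot, Zrot, Real.cos_pi_sub, Real.sin_pi_sub]
    try ring
  have p2_2 : (Zrot (π - δ) * Yrot a) 1 2 = 1*Real.sin δ*Real.sin a := by
    rw [Matrix.mul_apply, Fin.sum_univ_three]
    simp [Yrot, Zrot, Real.cos_pi_sub, Real.sin_pi_sub]
    try ring
  have p3_0 : (Zrot (π - δ) * Yrot a * Zrot (π - α)) 1 0 = -1*Real.sin α*Real.cos δ - 1*Real.cos α*Real.sin δ*Real.cos a := by
    rw [Matrix.mul_apply, Fin.sum_univ_three, p2_0, p2_1, p2_2]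
    simp [Yrot, Zrot, Real.cos_pi_sub, Real.sin_pi_sub]
    try ring
  have p3_1 : (Zrot (π - δ) * Yrot a * Zrot (π - α)) 1 1 = -1*Real.sin α*Real.sin δ*Real.cos a + 1*Real.cos α*Real.cos δ := by
    rw [Matrix.mul_apply, Fin.sum_univ_three, p2_0, p2_1, p2_2]
    simp [Yrot, Zrot, Real.cos_pi_sub, Real.sin_pi_sub]
    try ring
  have p3_2 : (Zrot (π - δ) * Yrot a * Zrot (π - α)) 1 2 = 1*Real.sin δ*Real.sin a := by
    rw [Matrix.mul_apply, Fin.sum_univ_three, p2_0, p2_1, p2_2]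
    simp [Yrot, Zrot, Real.cos_pi_sub, Real.sin_pi_sub]
    try ring
  have p4_0 : (Zrot (π - δ) * Yrot a * Zrot (π - α) * Yrot a) 1 0 = -1*Real.sin δ*Real.sin a^2 - 1*Real.sin α*Real.cos δ*Real.cos a - 1*Real.cos α*Real.sin δ*Real.cos a^2 := by
    rw [Matrix.mul_apply, Fin.sum_univ_three, p3_0, p3_1, p3_2]
    simp [Yrot, Zrot, Real.cos_pi_sub, Real.sin_pi_sub]
    try ring
  have p4_1 : (Zrot (π - δ) * Yrot a * Zrot (π - α) * Yrot a) 1 1 = -1*Real.sin α*Real.sin δ*Real.cos a + 1*Real.cos α*Real.cos δ := by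
    rw [Matrix.mul_apply, Fin.sum_univ_three, p3_0, p3_1, p3_2]
    simp [Yrot, Zrot, Real.cos_pi_sub, Real.sin_pi_sub]
    try ring
  have p4_2 : (Zrot (π - δ) * Yrot a * Zrot (π - α) * Yrot a) 1 2 = 1*Real.sin δ*Real.cos a*Real.sin a - 1*Real.sin α*Real.cos δ*Real.sin a - 1*Real.cos α*Real.sin δ*Real.cos a*Real.sin a := by
    rw [Matrix.mul_apply, Fin.sum_univ_three, p3_0, p3_1, p3_2]
    simp [Yrot, Zrot, Real.cos_pi_sub, Real.sin_pi_sub]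
    try ring
  have p5_0 : (Zrot (π - δ) * Yrot a * Zrot (π - α) * Yrot a * Zrot (π - β)) 1 0 = 1*Real.cos β*Real.sin δ*Real.sin a^2 - 1*Real.sin α*Real.sin β*Real.sin δ*Real.cos a + 1*Real.sin α*Real.cos β*Real.cos δ*Real.cos a + 1*Real.cos α*Real.sin β*Real.cos δ + 1*Real.cos α*Real.cos β*Real.sin δ*Real.cos a^2 := by
    rw [Matrix.mul_apply, Fin.sum_univ_three, p4_0, p4_1, p4_2]
    simp [Yrot, Zrot, Real.cos_pi_sub, Real.sin_pi_sub]
    try ring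
  have p5_1 : (Zrot (π - δ) * Yrot a * Zrot (π - α) * Yrot a * Zrot (π - β)) 1 1 = 1*Real.sin β*Real.sin δ*Real.sin a^2 + 1*Real.sin α*Real.sin β*Real.cos δ*Real.cos a + 1*Real.sin α*Real.cos β*Real.sin δ*Real.cos a + 1*Real.cos α*Real.sin β*Real.sin δ*Real.cos a^2 - 1*Real.cos α*Real.cos β*Real.cos δ := by
    rw [Matrix.mul_apply, Fin.sum_univ_three, p4_0, p4_1, p4_2]
    simp [Yrot, Zrot, Real.cos_pi_sub, Real.sin_pi_sub]
    try ring
  have p5_2 : (Zrot (π - δ) * Yrot a * Zrot (π - α) * Yrot a * Zrot (π - β)) 1 2 = 1*Real.sin δ*Real.cos a*Real.sin a - 1*Real.sin α*Real.cos δ*Real.sin a - 1*Real.cos α*Real.sin δ*Real.cos a*Real.sin a := by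
    rw [Matrix.mul_apply, Fin.sum_univ_three, p4_0, p4_1, p4_2]
    simp [Yrot, Zrot, Real.cos_pi_sub, Real.sin_pi_sub]
    try ring
  have p6_0 : (Zrot (π - δ) * Yrot a * Zrot (π - α) * Yrot a * Zrot (π - β) * Yrot a) 1 0 = -1*Real.sin δ*Real.cos a*Real.sin a^2 + 1*Real.cos β*Real.sin δ*Real.cos a*Real.sin a^2 + 1*Real.sin α*Real.cos δ*Real.sin a^2 - 1*Real.sin α*Real.sin β*Real.sin δ*Real.cos a^2 + 1*Real.sin α*Real.cos β*Real.cos δ*Real.cos a^2 + 1*Real.cos α*Real.sin δ*Real.cos a*Real.sin a^2 + 1*Real.cos α*Real.sin β*Real.cos δ*Real.cos a + 1*Real.cos α*Real.cos β*Real.sin δ*Real.cos a^3 := by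
    rw [Matrix.mul_apply, Fin.sum_univ_three, p5_0, p5_1, p5_2]
    simp [Yrot, Zrot, Real.cos_pi_sub, Real.sin_pi_sub]
    try ring
  have p6_1 : (Zrot (π - δ) * Yrot a * Zrot (π - α) * Yrot a * Zrot (π - β) * Yrot a) 1 1 = 1*Real.sin β*Real.sin δ*Real.sin a^2 + 1*Real.sin α*Real.sin β*Real.cos δ*Real.cos a + 1*Real.sin α*Real.cos β*Real.sin δ*Real.cos a + 1*Real.cos α*Real.sin β*Real.sin δ*Real.cos a^2 - 1*Real.cos α*Real.cos β*Real.cos δ := by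
    rw [Matrix.mul_apply, Fin.sum_univ_three, p5_0, p5_1, p5_2]
    simp [Yrot, Zrot, Real.cos_pi_sub, Real.sin_pi_sub]
    try ring
  have p6_2 : (Zrot (π - δ) * Yrot a * Zrot (π - α) * Yrot a * Zrot (π - β) * Yrot a) 1 2 = 1*Real.sin δ*Real.cos a^2*Real.sin a + 1*Real.cos β*Real.sin δ*Real.sin a^3 - 1*Real.sin α*Real.cos δ*Real.cos a*Real.sin a - 1*Real.sin α*Real.sin β*Real.sin δ*Real.cos a*Real.sin a + 1*Real.sin α*Real.cos β*Real.cos δ*Real.cos a*Real.sin a - 1*Real.cos α*Real.sin δ*Real.cos a^2*Real.sin a + 1*Real.cos α*Real.sin β*Real.cos δ*Real.sin a + 1*Real.cos α*Real.cos β*Real.sin δ*Real.cos a^2*Real.sin a := by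
    rw [Matrix.mul_apply, Fin.sum_univ_three, p5_0, p5_1, p5_2]
    simp [Yrot, Zrot, Real.cos_pi_sub, Real.sin_pi_sub]
    try ring
  have p7_0 : (Zrot (π - δ) * Yrot a * Zrot (π - α) * Yrot a * Zrot (π - β) * Yrot a * Zrot (π - γ)) 1 0 = 1*Real.cos γ*Real.sin δ*Real.cos a*Real.sin a^2 + 1*Real.sin β*Real.sin γ*Real.sin δ*Real.sin a^2 - 1*Real.cos β*Real.cos γ*Real.sin δ*Real.cos a*Real.sin a^2 - 1*Real.sin α*Real.cos γ*Real.cos δ*Real.sin a^2 + 1*Real.sin α*Real.sin β*Real.sin γ*Real.cos δ*Real.cos a + 1*Real.sin α*Real.sin β*Real.cos γ*Real.sin δ*Real.cos a^2 + 1*Real.sin α*Real.cos β*Real.sin γ*Real.sin δ*Real.cos a - 1*Real.sin α*Real.cos β*Real.cos γ*Real.cos δ*Real.cos a^2 - 1*Real.cos α*Real.cos γ*Real.sin δ*Real.cos a*Real.sin a^2 + 1*Real.cos α*Real.sin β*Real.sin γ*Real.sin δ*Real.cos a^2 - 1*Real.cos α*Real.sin β*Real.cos γ*Real.cos δ*Real.cos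 a - 1*Real.cos α*Real.cos β*Real.sin γ*Real.cos δ - 1*Real.cos α*Real.cos β*Real.cos γ*Real.sin δ*Real.cos a^3 := by
    rw [Matrix.mul_apply, Fin.sum_univ_three, p6_0, p6_1, p6_2]
    simp [Yrot, Zrot, Real.cos_pi_sub, Real.sin_pi_sub]
    try ring
  have p7_1 : (Zrot (π - δ) * Yrot a * Zrot (π - α) * Yrot a * Zrot (π - β) * Yrot a * Zrot (π - γ)) 1 1 = 1*Real.sin γ*Real.sin δ*Real.cos a*Real.sin a^2 - 1*Real.sin β*Real.cos γ*Real.sin δ*Real.sin a^2 - 1*Real.cos β*Real.sin γ*Real.sin δ*Real.cos a*Real.sin a^2 - 1*Real.sin α*Real.sin γ*Real.cos δ*Real.sin a^2 + 1*Real.sin α*Real.sin β*Real.sin γ*Real.sin δ*Real.cos a^2 - 1*Real.sin α*Real.sin β*Real.cos γ*Real.cos δ*Real.cos a - 1*Real.sin α*Real.cos β*Real.sin γ*Real.cos δ*Real.cos a^2 - 1*Real.sin α*Real.cos β*Real.cos γ*Real.sin δ*Real.cos a - 1*Real.cos α*Real.sin γ*Real.sin δ*Real.cos a*Real.sin a^2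 - 1*Real.cos α*Real.sin β*Real.sin γ*Real.cos δ*Real.cos a - 1*Real.cos α*Real.sin β*Real.cos γ*Real.sin δ*Real.cos a^2 - 1*Real.cos α*Real.cos β*Real.sin γ*Real.sin δ*Real.cos a^3 + 1*Real.cos α*Real.cos β*Real.cos γ*Real.cos δ := by
    rw [Matrix.mul_apply, Fin.sum_univ_three, p6_0, p6_1, p6_2]
    simp [Yrot, Zrot, Real.cos_pi_sub, Real.sin_pi_sub]
    try ring
  have p7_2 : (Zrot (π - δ) * Yrot a * Zrot (π - α) * Yrot a * Zrot (π - β) * Yrot a * Zrot (π - γ)) 1 2 = 1*Real.sin δ*Real.cos a^2*Real.sin a + 1*Real.cos β*Real.sin δ*Real.sin a^3 - 1*Real.sin α*Real.cos δ*Real.cos a*Real.sin a - 1*Real.sin α*Real.sin β*Real.sin δ*Real.cos a*Real.sin a + 1*Real.sin α*Real.cos β*Real.cos δ*Real.cos a*Real.sin a - 1*Real.cos α*Real.sin δ*Real.cos a^2*Real.sin a + 1*Real.cos α*Real.sin β*Real.cos δ*Real.sin a + 1*Real.cos α*Real.cos β*Real.sin δ*Real.cos a^2*Real.sin a := by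
    rw [Matrix.mul_apply, Fin.sum_univ_three, p6_0, p6_1, p6_2]
    simp [Yrot, Zrot, Real.cos_pi_sub, Real.sin_pi_sub]
    try ring
  rw [p7_1]
  linear_combination hK + (-1*Real.sin γ*Real.sin δ*Real.cos a*Real.sin a^2 - 1*Real.sin β*Real.sin γ*Real.cos δ*Real.cos a - 1*Real.sin β*Real.cos γ*Real.sin δ*Real.cos a^2 - 1*Real.cos β*Real.sin γ*Real.sin δ*Real.cos a^3 + 1*Real.cos β*Real.cos γ*Real.cos δ) * hca + (-1*Real.sin γ*Real.cos δ*Real.sin a^2 + 1*Real.sin β*Real.sin γ*Real.sin δ*Real.cos a^2 - 1*Real.sin β*Real.cos γ*Real.cos δ*Real.cos a - 1*Real.cos β*Real.sin γ*Real.cos δ*Real.cos a^2 - 1*Real.cos β*Real.cos γ*Real.sin δ*Real.cos a) * hsa + (-1*Real.sin γ*Real.sin δ*Real.cos a*Real.sin a^2 + 1*Real.sin (α/2)^2*Real.sin γ*Real.sin δ*Real.cos a^3 - 1*Real.sin (α/2)^2*Real.cos γ*Real.cos δ - 2*Real.cos (α/2)*Real.sin (α/2)*Real.sin γ*Real.cos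 δ*Real.cos a^2 - 2*Real.cos (α/2)*Real.sin (α/2)*Real.cos γ*Real.sin δ*Real.cos a - 1*Real.cos (α/2)^2*Real.sin γ*Real.sin δ*Real.cos a^3 + 1*Real.cos (α/2)^2*Real.cos γ*Real.cos δ) * hcb + (-1*Real.cos γ*Real.sin δ*Real.sin a^2 + 1*Real.sin (α/2)^2*Real.sin γ*Real.cos δ*Real.cos a + 1*Real.sin (α/2)^2*Real.cos γ*Real.sin δ*Real.cos a^2 + 2*Real.cos (α/2)*Real.sin (α/2)*Real.sin γ*Real.sin δ*Real.cos a^2 - 2*Real.cos (α/2)*Real.sin (α/2)*Real.cos γ*Real.cos δ*Real.cos a - 1*Real.cos (α/2)^2*Real.sin γ*Real.cos δ*Real.cos a - 1*Real.cos (α/2)^2*Real.cos γ*Real.sin δ*Real.cos a^2) * hsb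

theorem stmt_8 (α β γ δ a : ℝ)
    (hα : Real.sin (α / 2) ≠ 0) (hβ : Real.sin (β / 2) ≠ 0)
    (h1 : Real.sin (α / 2) * Real.sin (δ - β / 2) =
      Real.sin (β / 2) * Real.sin (γ - α / 2))
    (h2 : (1 - Real.cos α) * Real.sin δ * Real.cos a = Real.sin α * Real.cos δ + Real.sin γ)
    (h3 : (1 - Real.cos β) * Real.sin γ * Real.cos a = Real.sin β * Real.cos γ + Real.sin δ) :
    (Zrot (π - δ) * Yrot a * Zrot (π - α) * Yrot a * Zrot (π - β) * Yrot a *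
      Zrot (π - γ)) 1 1 = 1 ∧
    ∃ b : ℝ, Yrot a * Zrot (π - α) * Yrot a * Zrot (π - β) * Yrot a * Zrot (π - γ) *
      Yrot b * Zrot (π - δ) = 1 := by
  have hp1 := part1 α β γ δ a hα hβ h1 h2 h3
  exact ⟨hp1, part2 α β γ δ a hp1⟩
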